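/- Let (σ, α) be a combinatorial map on a finite set H with |H| = 2n (n ≥ 1), rooted at r, with a left-connected orientation (I, O); with the notation of the unfolding construction, let ψ = π∘α' (the face-permutation of the mobile) and ϕ' = (i,o)∘τ'∘α'. Then for every h ∈ I', the first-return restriction satisfies (ψ⁻¹)_{|I'}(h) = α'(ϕ'_{|O'}(α'(h))); that is, ψ⁻¹_{|I'} = α'∘ϕ'_{|O'}∘α' as permutations of I'. -/

import Mathlib

/-- First-return restriction of `f` to `S`, viewed as a map on the whole set
(acting as the identity outside `S`). -/
noncomputable def restrictFun {X : Type*} (f : X → X) (S : Set X) (x : X) : X := by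
  classical
  exact if hx : x ∈ S ∧ ∃ k : ℕ, 0 < k ∧ f^[k] x ∈ S then f^[Nat.find hx.2] x else x

/-- `(σ,α)` is a combinatorial map. -/
def IsCombMap {X : Type*} (σ α : Equiv.Perm X) : Prop :=
  (∀ h, α h ≠ h) ∧ (∀ h, α (α h) = h) ∧
    ∀ x y : X, ∃ g ∈ Subgroup.closure ({σ, α} : Set (Equiv.Perm X)), g x = y

/-- The backward function of an orientation with ingoing set `I`. -/
noncomputable def backward {X : Type*} (σ α : Equiv.Perm X) (I : Set X) (h : X) : X := by
  classical
  exact if h ∈ I then σ (α h) else σ h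

/-- The number of orbits of `f` on `S` (forward orbits inside `S`). -/
noncomputable def numOrbitsOn {X : Type*} (f : X → X) (S : Set X) : ℕ :=
  ((fun x => {y | y ∈ S ∧ ∃ k : ℕ, f^[k] x = y}) '' S).ncard

/-- `H' = H ⊕ Bool`, where `i = Sum.inr true` and `o = Sum.inr false` are the two new
half-edges. The extended edge-involution `α'` acts as `α` on `H` and swaps `i` and `o`. -/
def alphaExt {H : Type*} (α : Equiv.Perm H) : Equiv.Perm (H ⊕ Bool) :=
  Equiv.sumCongr α (Equiv.swap true false)

/-- The extended vertex-permutation `σ'` of the unfolding construction: `σ' i = r`,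
`σ' (σ⁻¹ r) = i`, `σ' o = o` and `σ' = σ` elsewhere. -/
noncomputable def sigmaExt {H : Type*} (σ : Equiv.Perm H) (r : H) :
    Equiv.Perm (H ⊕ Bool) := by
  classical
  exact Equiv.sumCongr σ (1 : Equiv.Perm Bool) *
    Equiv.swap (Sum.inr true) (Sum.inl (σ⁻¹ r))

lemma restrictFun_of_not_mem {X : Type*} (f : X → X) (S : Set X) {x : X} (hx : x ∉ S) :
    restrictFun f S x = x := by
  classical
  rw [restrictFun, dif_neg]
  rintro ⟨h1, -⟩
  exact hx h1

lemma restrictFun_eq_of_min {X : Type*} (f : X → X) (S : Set X) {x : X} (hx : x ∈ S)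
    {k : ℕ} (hk : 0 < k) (hks : f^[k] x ∈ S)
    (hmin : ∀ j, 0 < j → j < k → f^[j] x ∉ S) :
    restrictFun f S x = f^[k] x := by
  classical
  have hex : x ∈ S ∧ ∃ m : ℕ, 0 < m ∧ f^[m] x ∈ S := ⟨hx, k, hk, hks⟩
  rw [restrictFun, dif_pos hex]
  have : Nat.find hex.2 = k := by
    rw [Nat.find_eq_iff]
    exact ⟨⟨hk, hks⟩, fun n hn hn' => hmin n hn'.1 hn hn'.2⟩
  rw [this]

lemma restrictFun_mem {X : Type*} (f : X → X) (S : Set X) {x : X} (hx : x ∈ S)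
    (hex : ∃ k : ℕ, 0 < k ∧ f^[k] x ∈ S) : restrictFun f S x ∈ S := by
  classical
  rw [restrictFun, dif_pos ⟨hx, hex⟩]
  exact (Nat.find_spec (⟨hx, hex⟩ : x ∈ S ∧ ∃ k : ℕ, 0 < k ∧ f^[k] x ∈ S).2).2

lemma perm_return {X : Type*} [Finite X] (f : Equiv.Perm X) (x : X) :
    ∃ k : ℕ, 0 < k ∧ (⇑f)^[k] x = x := by
  refine ⟨orderOf f, ?_, ?_⟩
  · exact orderOf_pos f
  · rw [← Equiv.Perm.coe_pow, pow_orderOf_eq_one]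
    rfl

/-- with the notation of the unfolding construction, the
face-permutation `ψ = π∘α'` of the mobile and the permutation `ϕ' = (i,o)∘τ'∘α'`
(where `τ' = σ'∘π_∘⁻¹`) satisfy `ψ⁻¹_{|I'} = α'∘ϕ'_{|O'}∘α'` on `I'`. -/
theorem mobile_face_vs_tree_face {H : Type*} [Fintype H] [DecidableEq H]
    (n : ℕ) (hn : 1 ≤ n) (hcard : Fintype.card H = 2 * n)
    (σ α : Equiv.Perm H) (hmap : IsCombMap σ α) (r : H) (I O : Set H)
    (hpart : I ∪ O = Set.univ) (hdisj : I ∩ O = ∅) (hIO : α '' I = O)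
    (hlc : ∀ h : H, ∃ q : ℕ, 0 < q ∧ (backward σ α I)^[q] h = r)
    (πo : Equiv.Perm (H ⊕ Bool))
    (hπo : ⇑πo = restrictFun (⇑(sigmaExt σ r))
      (Sum.inl '' I ∪ {Sum.inr true}))
    (πb : Equiv.Perm (H ⊕ Bool))
    (hπb : ⇑πb = restrictFun
      (⇑(Equiv.swap (Sum.inr true : H ⊕ Bool) (Sum.inr false) * sigmaExt σ r * alphaExt α))
      (Sum.inl '' O ∪ {Sum.inr false})) :
    ∀ h ∈ (Sum.inl '' I ∪ {Sum.inr true} : Set (H ⊕ Bool)),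
      restrictFun (⇑(πo * πb⁻¹ * alphaExt α)⁻¹) (Sum.inl '' I ∪ {Sum.inr true}) h =
        alphaExt α (restrictFun
          (⇑(Equiv.swap (Sum.inr true : H ⊕ Bool) (Sum.inr false) *
              (sigmaExt σ r * πo⁻¹) * alphaExt α))
          (Sum.inl '' O ∪ {Sum.inr false}) (alphaExt α h)) := by
  classical
  obtain ⟨hαne, hαα, -⟩ := hmap
  set I' : Set (H ⊕ Bool) := Sum.inl '' I ∪ {Sum.inr true} with hI'
  set O' : Set (H ⊕ Bool) := Sum.inl '' O ∪ {Sum.inr false} with hO'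
  set φ' : Equiv.Perm (H ⊕ Bool) :=
    Equiv.swap (Sum.inr true : H ⊕ Bool) (Sum.inr false) * sigmaExt σ r * alphaExt α with hφ'
  -- α' is an involution
  have hαinv : ∀ x : H ⊕ Bool, alphaExt α (alphaExt α x) = x := by
    rintro (a | b)
    · simp [alphaExt, hαα]
    · simp [alphaExt]
  have hαsq : alphaExt α * alphaExt α = 1 := by
    ext x
    simp [hαinv x]
  have hαsymm : (alphaExt α)⁻¹ = alphaExt α := inv_eq_of_mul_eq_one_right hαsq
  -- α' maps I' to O' and back
  have hA1 : ∀ x ∈ I', alphaExt α x ∈ O' := by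
    rintro x (⟨a, ha, rfl⟩ | rfl)
    · left
      exact ⟨α a, hIO ▸ ⟨a, ha, rfl⟩, rfl⟩
    · right
      simp [alphaExt]
  have hA2 : ∀ y ∈ O', alphaExt α y ∈ I' := by
    rintro y (⟨b, hb, rfl⟩ | rfl)
    · rw [← hIO] at hb
      obtain ⟨a, ha, rfl⟩ := hb
      have h1 : alphaExt α (Sum.inl (α a)) = Sum.inl (α (α a)) := by simp [alphaExt]
      rw [h1, hαα]
      exact Or.inl ⟨a, ha, rfl⟩
    · right
      simp [alphaExt]
  -- disjointness and complement
  have hdisj' : ∀ x, x ∈ I' → x ∉ O' := by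
    rintro x (⟨a, ha, rfl⟩ | rfl) (⟨b, hb, hx⟩ | hx)
    · have hba : b = a := by injection hx
      have : a ∈ I ∩ O := ⟨ha, hba ▸ hb⟩
      rw [hdisj] at this
      exact this
    · exact Sum.inl_ne_inr hx
    · exact Sum.inl_ne_inr hx
    · simp at hx
  have hcompO : ∀ x : H ⊕ Bool, x ∉ O' → x ∈ I' := by
    rintro (a | b) hx
    · have ha : a ∈ I ∪ O := by rw [hpart]; exact Set.mem_univ a
      rcases ha with ha | ha
      · exact Or.inl ⟨a, ha, rfl⟩
      · exact absurd (Or.inl ⟨a, ha, rfl⟩) hx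
    · cases b
      · exact absurd (Or.inr rfl) hx
      · exact Or.inr rfl
  -- πo⁻¹ fixes everything outside I', maps I' into I'
  have hπofix : ∀ y, y ∉ I' → πo⁻¹ y = y := by
    intro y hy
    have h1 : πo y = y := by rw [hπo]; exact restrictFun_of_not_mem _ _ hy
    conv_lhs => rw [← h1]
    exact πo.symm_apply_apply y
  have hπoI : ∀ x, x ∈ I' → πo⁻¹ x ∈ I' := by
    intro x hx
    by_contra hcon
    have h1 : πo (πo⁻¹ x) = πo⁻¹ x := by
      rw [hπo]
      exact restrictFun_of_not_mem _ _ hcon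
    rw [show πo (πo⁻¹ x) = x from πo.apply_symm_apply x] at h1
    exact hcon (h1 ▸ hx)
  -- πb fixes everything outside O', maps O' into O'
  have hπbfix : ∀ y, y ∉ O' → πb y = y := by
    intro y hy
    rw [hπb]
    exact restrictFun_of_not_mem _ _ hy
  have hπbO : ∀ y, y ∈ O' → πb y ∈ O' := by
    intro y hy
    rw [hπb]
    obtain ⟨k, hk, hky⟩ := perm_return φ' y
    exact restrictFun_mem _ _ hy ⟨k, hk, by rw [hky]; exact hy⟩
  -- main argument
  intro h hh
  set x : H ⊕ Bool := πo⁻¹ h with hx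
  have hxI : x ∈ I' := hπoI h hh
  set y : H ⊕ Bool := alphaExt α x with hy
  have hyO : y ∈ O' := hA1 x hxI
  -- the return data of φ' at y
  have hex : ∃ k : ℕ, 0 < k ∧ (⇑φ')^[k] y ∈ O' := by
    obtain ⟨k, hk, hky⟩ := perm_return φ' y
    exact ⟨k, hk, by rw [hky]; exact hyO⟩
  set m : ℕ := Nat.find hex with hm
  obtain ⟨hm0, hmO⟩ : 0 < m ∧ (⇑φ')^[m] y ∈ O' := Nat.find_spec hex
  have hmmin : ∀ j, 0 < j → j < m → (⇑φ')^[j] y ∉ O' := fun j hj0 hjm hjS =>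
    Nat.find_min hex hjm ⟨hj0, hjS⟩
  have hπby : πb y = (⇑φ')^[m] y := by
    rw [hπb]
    exact restrictFun_eq_of_min _ _ hyO hm0 hmO hmmin
  -- LHS
  have hgy : ∀ z, (πo * πb⁻¹ * alphaExt α)⁻¹ z = alphaExt α (πb (πo⁻¹ z)) := by
    intro z
    simp [mul_inv_rev, hαsymm, Equiv.Perm.mul_apply]
  have hgh : (⇑(πo * πb⁻¹ * alphaExt α)⁻¹) h = y := by
    rw [hgy h, hπbfix x (hdisj' x hxI), hy]
  have hg2 : (⇑(πo * πb⁻¹ * alphaExt α)⁻¹)^[2] h = alphaExt α (πb y) := by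
    rw [show (2 : ℕ) = 1 + 1 from rfl, Function.iterate_add_apply,
      Function.iterate_one, hgh, hgy y, hπofix y (fun hyI => hdisj' y hyI hyO)]
  have hLHS : restrictFun (⇑(πo * πb⁻¹ * alphaExt α)⁻¹) I' h = alphaExt α (πb y) := by
    rw [← hg2]
    refine restrictFun_eq_of_min _ _ hh (by norm_num) ?_ ?_
    · rw [hg2]
      exact hA2 _ (hπbO y hyO)
    · intro j hj0 hj2
      interval_cases j
      rw [Function.iterate_one, hgh]
      exact fun hyI => hdisj' y hyI hyO
  -- RHS: the permutation F
  set F : Equiv.Perm (H ⊕ Bool) :=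
    Equiv.swap (Sum.inr true : H ⊕ Bool) (Sum.inr false) *
      (sigmaExt σ r * πo⁻¹) * alphaExt α with hF
  have hFone : F (alphaExt α h) = φ' y := by
    simp only [hF, hφ', Equiv.Perm.mul_apply]
    rw [hαinv h]
    congr 1
    rw [hy, hαinv x]
  have hFI : ∀ z, z ∉ O' → F z = φ' z := by
    intro z hz
    have hz' : alphaExt α z ∉ I' := by
      intro hcon
      exact hz ((hαinv z) ▸ hA1 _ hcon)
    simp only [hF, hφ', Equiv.Perm.mul_apply]
    rw [hπofix _ hz']
  have hclaim : ∀ k, 1 ≤ k → (∀ j, 1 ≤ j → j < k → (⇑φ')^[j] y ∉ O') →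
      (⇑F)^[k] (alphaExt α h) = (⇑φ')^[k] y := by
    intro k
    induction k with
    | zero => intro hk; omega
    | succ k ih =>
      intro _ hks
      rcases Nat.eq_zero_or_pos k with rfl | hk'
      · simpa using hFone
      · rw [Function.iterate_succ_apply', Function.iterate_succ_apply',
          ih hk' (fun j hj0 hjk => hks j hj0 (by omega))]
        exact hFI _ (hks k hk' (by omega))
  have hRHS : restrictFun (⇑F) O' (alphaExt α h) = (⇑φ')^[m] y := by
    rw [← hclaim m hm0 hmmin]
    refine restrictFun_eq_of_min _ _ (hA1 h hh) hm0 ?_ ?_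
    · rw [hclaim m hm0 hmmin]
      exact hmO
    · intro j hj0 hjm
      rw [hclaim j hj0 (fun i hi0 hij => hmmin i hi0 (by omega))]
      exact hmmin j hj0 hjm
  rw [hLHS, hRHS, hπby]
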